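/- For each n ≥ 1 and all real x, the n-th derivative of arctan at x equals (n-1)! · (-1)^{n-1} · sin(n · arccot(x)) / (1+x²)^{n/2}, where arccot(x) = π/2 - arctan(x). -/

import Mathlib

open Finset Polynomial Real

noncomputable def arccot (x : ℝ) : ℝ := Real.pi / 2 - Real.arctan x

private lemma my_sqrt_pow (a : ℝ) (ha : 0 ≤ a) (n : ℕ) :
    Real.sqrt (a ^ n) = Real.sqrt a ^ n := by
  conv_lhs => rw [show a = Real.sqrt a ^ 2 from (Real.sq_sqrt ha).symm]
  rw [← pow_mul, mul_comm, pow_mul, Real.sqrt_sq (by positivity)]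

private lemma arccot_hasDerivAt (x : ℝ) : HasDerivAt arccot (-(1 / (1 + x ^ 2))) x := by
  show HasDerivAt (fun x => Real.pi / 2 - Real.arctan x) _ x
  simpa [arccot] using (Real.hasDerivAt_arctan x).const_sub (Real.pi / 2)

private lemma sin_arccot (x : ℝ) : Real.sin (arccot x) = 1 / Real.sqrt (1 + x ^ 2) := by
  rw [arccot, Real.sin_pi_div_two_sub, Real.cos_arctan]

private lemma cos_arccot (x : ℝ) : Real.cos (arccot x) = x / Real.sqrt (1 + x ^ 2) := by
  rw [arccot, Real.cos_pi_div_two_sub, Real.sin_arctan]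

private lemma key_deriv (m : ℕ) (x : ℝ) :
    HasDerivAt (fun y => Real.sin ((m + 1 : ℕ) * arccot y) / Real.sqrt ((1 + y ^ 2) ^ (m + 1)))
      (-((m + 1 : ℕ) : ℝ) * Real.sin ((m + 2 : ℕ) * arccot x) / Real.sqrt ((1 + x ^ 2) ^ (m + 2)))
      x := by
  have hpos : (0 : ℝ) < 1 + x ^ 2 := by positivity
  have hs0 : 0 < Real.sqrt (1 + x ^ 2) := Real.sqrt_pos.mpr hpos
  have hs2 : Real.sqrt (1 + x ^ 2) ^ 2 = 1 + x ^ 2 := Real.sq_sqrt hpos.le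
  have hθ : HasDerivAt arccot (-(1 / (1 + x ^ 2))) x := arccot_hasDerivAt x
  have h1 : HasDerivAt (fun y => Real.sin (((m + 1 : ℕ) : ℝ) * arccot y))
      (Real.cos (((m + 1 : ℕ) : ℝ) * arccot x) * (((m + 1 : ℕ) : ℝ) * -(1 / (1 + x ^ 2)))) x :=
    (Real.hasDerivAt_sin _).comp x (hθ.const_mul _)
  have hbase : HasDerivAt (fun y : ℝ => 1 + y ^ 2) (2 * x) x := by
    simpa using ((hasDerivAt_pow 2 x).const_add 1)
  have h2 : HasDerivAt (fun y : ℝ => (1 + y ^ 2) ^ (m + 1))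
      ((m + 1 : ℕ) * (1 + x ^ 2) ^ m * (2 * x)) x := by
    simpa using hbase.fun_pow (m + 1)
  have h3 : HasDerivAt (fun y => Real.sqrt ((1 + y ^ 2) ^ (m + 1)))
      (((m + 1 : ℕ) * (1 + x ^ 2) ^ m * (2 * x)) / (2 * Real.sqrt ((1 + x ^ 2) ^ (m + 1)))) x :=
    h2.sqrt (by positivity)
  have h4 := h1.fun_div h3 (by positivity)
  refine h4.congr_deriv (Eq.symm ?_)
  set s := Real.sqrt (1 + x ^ 2) with hs
  have hsin : Real.sin (arccot x) = 1 / s := sin_arccot x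
  have hcos : Real.cos (arccot x) = x / s := cos_arccot x
  have hadd : Real.sin (((m + 2 : ℕ) : ℝ) * arccot x)
      = Real.sin (((m + 1 : ℕ) : ℝ) * arccot x) * Real.cos (arccot x)
        + Real.cos (((m + 1 : ℕ) : ℝ) * arccot x) * Real.sin (arccot x) := by
    rw [← Real.sin_add]
    push_cast
    ring_nf
  rw [my_sqrt_pow _ hpos.le, my_sqrt_pow _ hpos.le, ← hs, hadd, hsin, hcos,
    show (1 + x ^ 2) ^ m = s ^ (2 * m) by rw [pow_mul, hs2], ← hs2]
  have hne : s ≠ 0 := ne_of_gt hs0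
  field_simp
  ring

theorem arctan_deriv_trig (n : ℕ) (hn : 1 ≤ n) (x : ℝ) :
    iteratedDeriv n Real.arctan x =
      (n - 1).factorial * ((-1 : ℝ)^(n-1) * Real.sin (n * arccot x)) /
        Real.sqrt ((1 + x^2)^n) := by
  induction n, hn using Nat.le_induction generalizing x with
  | base =>
    have hpos : (0 : ℝ) < 1 + x ^ 2 := by positivity
    have hs2 : Real.sqrt (1 + x ^ 2) ^ 2 = 1 + x ^ 2 := Real.sq_sqrt hpos.le
    rw [iteratedDeriv_one, (Real.hasDerivAt_arctan x).deriv]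
    simp only [Nat.factorial, Nat.cast_one, pow_zero, pow_one, one_mul, Nat.sub_self,
      Nat.cast_ofNat]
    rw [sin_arccot, div_div, Real.mul_self_sqrt hpos.le]
  | succ n hn ih =>
    obtain ⟨m, rfl⟩ := Nat.exists_eq_add_of_le hn
    have hfun : iteratedDeriv (1 + m) Real.arctan =
        fun y => ((1 + m - 1).factorial : ℝ) * (-1 : ℝ) ^ (1 + m - 1) *
          (Real.sin ((1 + m : ℕ) * arccot y) / Real.sqrt ((1 + y ^ 2) ^ (1 + m))) := by
      funext y
      rw [ih y]
      ring
    rw [iteratedDeriv_succ, hfun]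
    have hd := ((key_deriv m x).const_mul
      (((1 + m - 1).factorial : ℝ) * (-1 : ℝ) ^ (1 + m - 1)))
    rw [show (1 + m) = (m + 1) by ring] at hd ⊢
    rw [hd.deriv]
    have hfac : ((m + 1 + 1 - 1).factorial : ℝ) = (m + 1) * ((m + 1 - 1).factorial : ℝ) := by
      push_cast [Nat.factorial_succ]
      ring
    have hD : (0:ℝ) < Real.sqrt ((1 + x ^ 2) ^ (m + 2)) := by positivity
    rw [show m + 1 + 1 = m + 2 by ring] at *
    rw [hfac]
    simp only [Nat.add_sub_cancel, show m + 2 - 1 = m + 1 from rfl]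
    push_cast
    field_simp
    ring
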